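/- arXiv:1703.07201 — 3 statements merged into one kernel-verified Lean document; each statement's English description precedes it below -/
import Mathlib

section
/- Let f : ℂ → ℂ be continuous on the closed unit disk {z : |z| ≤ 1} and complex differentiable (holomorphic) on the open unit disk {z : |z| < 1}. If the imaginary part of z²·f(z) is zero for every z with |z| = 1, then f(z) = 0 for every z in the closed unit disk. -/
open Metric Set

private lemma seq_aux : Filter.Tendsto (fun n : ℕ => (1 / (n + 2) : ℝ)) Filter.atTop (nhds 0) := by
  have h1 : Filter.Tendsto (fun n : ℕ => ((n : ℝ) + 2)) Filter.atTop Filter.atTop :=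
    Filter.tendsto_atTop_add_const_right _ 2 tendsto_natCast_atTop_atTop
  simpa [one_div, Function.comp_def] using tendsto_inv_atTop_zero.comp h1

theorem stmt_4 (f : ℂ → ℂ)
    (hc : ContinuousOn f (Metric.closedBall 0 1))
    (hd : DifferentiableOn ℂ f (Metric.ball 0 1))
    (hb : ∀ z : ℂ, ‖z‖ = 1 → (z ^ 2 * f z).im = 0) :
    ∀ z ∈ Metric.closedBall (0 : ℂ) 1, f z = 0 := by
  set g : ℂ → ℂ := fun z => z ^ 2 * f z with hg
  have hclos : closure (ball (0:ℂ) 1) = closedBall 0 1 := closure_ball 0 one_ne_zero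
  have hfr : frontier (ball (0:ℂ) 1) = sphere 0 1 := frontier_ball 0 one_ne_zero
  have hgd : DifferentiableOn ℂ g (ball 0 1) :=
    ((differentiable_pow 2).differentiableOn).mul hd
  have hgc : ContinuousOn g (closedBall 0 1) :=
    ((continuous_pow 2).continuousOn).mul hc
  -- Step 1: Im g = 0 on the closed ball, via the maximum principle applied to exp(±I*g)
  have him : ∀ z ∈ closedBall (0:ℂ) 1, (g z).im = 0 := by
    have key : ∀ s : ℂ, ‖s‖ = 1 → s.re = 0 → ∀ z ∈ closedBall (0:ℂ) 1,
        Real.exp ((s * g z).re) ≤ 1 := by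
      intro s hs1 hsre z hz
      have hdc : DiffContOnCl ℂ (fun z => Complex.exp (s * g z)) (ball 0 1) := by
        refine ⟨?_, ?_⟩
        · exact ((hgd.const_mul s).cexp)
        · rw [hclos]
          exact ((hgc.const_smul s).cexp)
      have hC : ∀ w ∈ frontier (ball (0:ℂ) 1), ‖Complex.exp (s * g w)‖ ≤ 1 := by
        intro w hw
        rw [hfr, mem_sphere_zero_iff_norm] at hw
        have himw : (g w).im = 0 := hb w hw
        rw [Complex.norm_exp]
        have : (s * g w).re = s.re * (g w).re - s.im * (g w).im := Complex.mul_re s (g w)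
        rw [this, hsre, himw]
        simp
      have := Complex.norm_le_of_forall_mem_frontier_norm_le isBounded_ball hdc hC
        (by rw [hclos]; exact hz)
      rwa [Complex.norm_exp] at this
    intro z hz
    have h1 := key Complex.I (by simp) (by simp) z hz
    have h2 := key (-Complex.I) (by simp) (by simp) z hz
    have e1 : (Complex.I * g z).re = -(g z).im := by simp [Complex.mul_re]
    have e2 : ((-Complex.I) * g z).re = (g z).im := by simp [Complex.mul_re]
    rw [e1, Real.exp_le_one_iff] at h1
    rw [e2, Real.exp_le_one_iff] at h2
    linarith
  -- Step 2: g is constant (hence 0) on the open ball, by the open mapping theorem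
  have hg0 : ∀ z ∈ ball (0:ℂ) 1, g z = 0 := by
    have han : AnalyticOnNhd ℂ g (ball 0 1) := hgd.analyticOnNhd isOpen_ball
    rcases han.is_constant_or_isOpen (convex_ball _ _).isPreconnected with ⟨w, hw⟩ | hopen
    · have h0 : (0:ℂ) ∈ ball (0:ℂ) 1 := by simp
      have : g 0 = w := hw 0 h0
      have hw0 : w = 0 := by rw [← this]; simp [hg]
      intro z hz; rw [hw z hz, hw0]
    · exfalso
      have hio : IsOpen (g '' ball 0 1) := hopen _ (subset_refl _) isOpen_ball
      have h0mem : g 0 ∈ g '' ball 0 1 := ⟨0, by simp, rfl⟩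
      rcases Metric.isOpen_iff.mp hio _ h0mem with ⟨ε, hε, hball⟩
      have hpt : g 0 + (ε/2) * Complex.I ∈ ball (g 0) ε := by
        rw [mem_ball, Complex.dist_eq]
        have h' : g 0 + (ε/2) * Complex.I - g 0 = ((ε:ℂ)/2) * Complex.I := by ring
        rw [h', norm_mul, Complex.norm_I, mul_one, norm_div, Complex.norm_real, Real.norm_eq_abs,
          _root_.abs_of_pos hε]
        have : ‖(2:ℂ)‖ = 2 := by norm_num
        rw [this]; linarith
      rcases hball hpt with ⟨u, hu, hgu⟩
      have h1 : (g u).im = 0 := him u (ball_subset_closedBall hu)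
      rw [hgu] at h1
      have hg00 : (g 0).im = 0 := him 0 (by simp)
      have h2 : (g 0 + (ε/2) * Complex.I).im = (g 0).im + ε/2 := by
        simp [Complex.add_im]
      rw [h2, hg00] at h1
      linarith
  -- Step 3: f = 0 on ball \ {0}, hence on the closed ball by continuity
  have hfball : ∀ z ∈ ball (0:ℂ) 1, z ≠ 0 → f z = 0 := by
    intro z hz hz0
    have hmul : z ^ 2 * f z = 0 := hg0 z hz
    exact (mul_eq_zero.mp hmul).resolve_left (pow_ne_zero 2 hz0)
  intro z hz
  have hcont : Filter.Tendsto f (nhdsWithin z (closedBall 0 1)) (nhds (f z)) :=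
    (hc z hz).tendsto
  rcases eq_or_ne z 0 with rfl | hz0
  · set a : ℕ → ℂ := fun n => ((1 / (n + 2) : ℝ) : ℂ) with ha
    have hlim : Filter.Tendsto a Filter.atTop (nhds (0 : ℂ)) := by
      have := (Complex.continuous_ofReal.tendsto 0).comp seq_aux
      simpa [ha, Function.comp_def, one_div] using this
    have hmem : ∀ n, a n ∈ ball (0:ℂ) 1 ∧ a n ≠ 0 := by
      intro n
      have h2n : (0:ℝ) < (n:ℝ) + 2 := by positivity
      have hpos : (0:ℝ) < 1 / (n + 2) := by positivity
      have hlt : (1 / (n + 2) : ℝ) < 1 := by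
        rw [div_lt_one h2n]
        have : (0:ℝ) ≤ n := Nat.cast_nonneg n
        linarith
      refine ⟨?_, ?_⟩
      · rw [mem_ball_zero_iff, ha]
        show ‖((1 / (n + 2) : ℝ) : ℂ)‖ < 1
        rw [Complex.norm_real, Real.norm_eq_abs, _root_.abs_of_pos hpos]
        exact hlt
      · exact Complex.ofReal_ne_zero.mpr (ne_of_gt hpos)
    have hlim' : Filter.Tendsto a Filter.atTop (nhdsWithin (0:ℂ) (closedBall 0 1)) :=
      tendsto_nhdsWithin_of_tendsto_nhds_of_eventually_within a hlim
        (Filter.Eventually.of_forall fun n => ball_subset_closedBall (hmem n).1)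
    have hT : Filter.Tendsto (fun n => f (a n)) Filter.atTop (nhds (f 0)) := hcont.comp hlim'
    have heq : ∀ n, f (a n) = 0 := fun n => hfball (a n) (hmem n).1 (hmem n).2
    have hT' : Filter.Tendsto (fun _ : ℕ => (0:ℂ)) Filter.atTop (nhds (f 0)) := by
      simpa [heq] using hT
    exact tendsto_nhds_unique hT' tendsto_const_nhds
  · set a : ℕ → ℂ := fun n => ((1 - 1 / (n + 2) : ℝ) : ℂ) * z with ha
    have hlim : Filter.Tendsto a Filter.atTop (nhds z) := by
      have h1 : Filter.Tendsto (fun n : ℕ => (1 - 1 / (n + 2) : ℝ)) Filter.atTop (nhds 1) := by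
        simpa using (tendsto_const_nhds.sub seq_aux)
      have h2 := ((Complex.continuous_ofReal.tendsto 1).comp h1).mul
        (tendsto_const_nhds : Filter.Tendsto (fun _ : ℕ => z) Filter.atTop (nhds z))
      simpa [ha, Function.comp] using h2
    have hmem : ∀ n, a n ∈ ball (0:ℂ) 1 ∧ a n ≠ 0 := by
      intro n
      have h2n : (0:ℝ) < (n:ℝ) + 2 := by positivity
      have hpos : (0:ℝ) < 1 - 1 / (n + 2) := by
        rw [sub_pos, div_lt_one h2n]
        have : (0:ℝ) ≤ n := Nat.cast_nonneg n
        linarith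
      have hlt1 : (1 - 1 / (n + 2) : ℝ) < 1 := by
        have : (0:ℝ) < 1 / (n + 2) := by positivity
        linarith
      have habs : ‖z‖ ≤ 1 := by rwa [mem_closedBall_zero_iff] at hz
      refine ⟨?_, ?_⟩
      · rw [mem_ball_zero_iff, ha]
        show ‖((1 - 1 / (n + 2) : ℝ) : ℂ) * z‖ < 1
        rw [norm_mul, Complex.norm_real, Real.norm_eq_abs, _root_.abs_of_pos hpos]
        calc (1 - 1 / (n + 2) : ℝ) * ‖z‖ ≤ (1 - 1 / (n + 2) : ℝ) * 1 := by
              exact mul_le_mul_of_nonneg_left habs (le_of_lt hpos)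
          _ = (1 - 1 / (n + 2) : ℝ) := mul_one _
          _ < 1 := hlt1
      · exact mul_ne_zero (Complex.ofReal_ne_zero.mpr (ne_of_gt hpos)) hz0
    have hlim' : Filter.Tendsto a Filter.atTop (nhdsWithin z (closedBall 0 1)) :=
      tendsto_nhdsWithin_of_tendsto_nhds_of_eventually_within a hlim
        (Filter.Eventually.of_forall fun n => ball_subset_closedBall (hmem n).1)
    have hT : Filter.Tendsto (fun n => f (a n)) Filter.atTop (nhds (f z)) := hcont.comp hlim'
    have heq : ∀ n, f (a n) = 0 := fun n => hfball (a n) (hmem n).1 (hmem n).2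
    have hT' : Filter.Tendsto (fun _ : ℕ => (0:ℂ)) Filter.atTop (nhds (f z)) := by
      simpa [heq] using hT
    exact tendsto_nhds_unique hT' tendsto_const_nhds
end

section
/- Work in Euclidean 3-space ℝ³ with its standard inner product ⟨·,·⟩ and cross product ×. Let ξ, N₁, N₂ be unit vectors with ⟨ξ, N₁⟩ = −⟨ξ, N₂⟩. For i = 1, 2 set Tᵢ = ξ − ⟨ξ, Nᵢ⟩·Nᵢ. Let θ be a real number and for i = 1, 2 set T^i_θ = cos θ · Tᵢ + sin θ · (Nᵢ × Tᵢ) and Jᵢ T^i_θ = Nᵢ × T^i_θ. Then ⟨T²_θ, N₁⟩·⟨J₂ T²_θ, N₁⟩ = ⟨T¹_θ, N₂⟩·⟨J₁ T¹_θ, N₂⟩. -/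
open Matrix Real in
theorem stmt_5 (ξ N₁ N₂ : Fin 3 → ℝ)
    (hξ : ξ ⬝ᵥ ξ = 1) (hN₁ : N₁ ⬝ᵥ N₁ = 1) (hN₂ : N₂ ⬝ᵥ N₂ = 1)
    (hopp : ξ ⬝ᵥ N₁ = -(ξ ⬝ᵥ N₂))
    (T₁ T₂ : Fin 3 → ℝ)
    (hT₁ : T₁ = ξ - (ξ ⬝ᵥ N₁) • N₁) (hT₂ : T₂ = ξ - (ξ ⬝ᵥ N₂) • N₂)
    (θ : ℝ) (T₁θ T₂θ : Fin 3 → ℝ)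
    (hT₁θ : T₁θ = Real.cos θ • T₁ + Real.sin θ • (N₁ ⨯₃ T₁))
    (hT₂θ : T₂θ = Real.cos θ • T₂ + Real.sin θ • (N₂ ⨯₃ T₂)) :
    (T₂θ ⬝ᵥ N₁) * ((N₂ ⨯₃ T₂θ) ⬝ᵥ N₁) = (T₁θ ⬝ᵥ N₂) * ((N₁ ⨯₃ T₁θ) ⬝ᵥ N₂) := by
  have hA : T₂θ ⬝ᵥ N₁ = -(T₁θ ⬝ᵥ N₂) := by
    rw [hT₁θ, hT₂θ, hT₁, hT₂]
    simp only [crossProduct, dotProduct, Fin.sum_univ_three] at *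
    simp only [Pi.add_apply, Pi.sub_apply, Pi.smul_apply, smul_eq_mul,
      LinearMap.mk₂_apply, Matrix.cons_val_zero, Matrix.cons_val_one,
      Matrix.head_cons, Matrix.cons_val_two, Matrix.tail_cons] at *
    linear_combination (Real.cos θ * (1 - (N₁ 0 * N₂ 0 + N₁ 1 * N₂ 1 + N₁ 2 * N₂ 2))) * hopp
  have hC : (N₂ ⨯₃ T₂θ) ⬝ᵥ N₁ = -((N₁ ⨯₃ T₁θ) ⬝ᵥ N₂) := by
    rw [hT₁θ, hT₂θ, hT₁, hT₂]
    simp only [crossProduct, dotProduct, Fin.sum_univ_three] at *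
    simp only [Pi.add_apply, Pi.sub_apply, Pi.smul_apply, smul_eq_mul,
      LinearMap.mk₂_apply, Matrix.cons_val_zero, Matrix.cons_val_one,
      Matrix.head_cons, Matrix.cons_val_two, Matrix.tail_cons] at *
    linear_combination (Real.sin θ * ((N₁ 0 * N₂ 0 + N₁ 1 * N₂ 1 + N₁ 2 * N₂ 2) - 1)) * hopp
      - Real.sin θ * (ξ 0 * N₁ 0 + ξ 1 * N₁ 1 + ξ 2 * N₁ 2) * hN₂
      - Real.sin θ * (ξ 0 * N₂ 0 + ξ 1 * N₂ 1 + ξ 2 * N₂ 2) * hN₁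
  rw [hA, hC]; ring
end

section
/- Work in Euclidean 3-space ℝ³ with its standard inner product ⟨·,·⟩ and cross product ×. Let κ, τ, H₁, H₂ be real numbers with H₁² + τ² ≠ 0 and H₂² + τ² ≠ 0, and set αᵢ = (κ − 4τ²)/(2√(Hᵢ² + τ²)) for i = 1, 2. Let N₁, N₂ be unit vectors with ⟨N₁, N₂⟩² ≠ 1 and set u = N₁ × N₂ (a nonzero vector orthogonal to N₁ and N₂). For i = 1, 2 let Tᵢ be a vector orthogonal to Nᵢ, let θᵢ be a real number, and set T^i_θ = cos θᵢ · Tᵢ + sin θᵢ · (Nᵢ × Tᵢ). Let A₁, A₂ be symmetric linear endomorphisms of ℝ³ with A₁N₁ = 0 and A₂N₂ = 0, and define Sᵢ : ℝ³ → ℝ³ by Sᵢ x = Aᵢ x − αᵢ·⟨T^i_θ, x⟩·T^i_θ + (αᵢ·‖Tᵢ‖²/2)·x − Hᵢ·x. Assume: (a) ⟨A₁ u, N₂⟩ + ⟨A₂ u, N₁⟩ = 0; and (b) √(H₁² + τ²)·⟨T²_θ, N₁⟩·⟨N₂ × T²_θ, N₁⟩ = √(H₂² + τ²)·⟨T¹_θ,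 N₂⟩·⟨N₁ × T¹_θ, N₂⟩. Then S₁ u is a scalar multiple of u if and only if S₂ u is a scalar multiple of u. -/
infixl:74 " ×₃ " => crossProduct

open Matrix

private lemma cp_dot_left (a b : Fin 3 → ℝ) : (a ×₃ b) ⬝ᵥ a = 0 := by
  simp [crossProduct, dotProduct, Fin.sum_univ_three]; ring

private lemma cp_dot_right (a b : Fin 3 → ℝ) : (a ×₃ b) ⬝ᵥ b = 0 := by
  simp [crossProduct, dotProduct, Fin.sum_univ_three]; ring

private lemma triple (a b c : Fin 3 → ℝ) : a ⬝ᵥ (b ×₃ c) = (c ×₃ a) ⬝ᵥ b := by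
  simp [crossProduct, dotProduct, Fin.sum_univ_three]; ring

private lemma triple2 (a b c : Fin 3 → ℝ) : a ⬝ᵥ (b ×₃ c) = -((b ×₃ a) ⬝ᵥ c) := by
  simp [crossProduct, dotProduct, Fin.sum_univ_three]; ring

private lemma lagrange (a b : Fin 3 → ℝ) :
    (a ×₃ b) ⬝ᵥ (a ×₃ b) = (a ⬝ᵥ a) * (b ⬝ᵥ b) - (a ⬝ᵥ b) ^ 2 := by
  simp [crossProduct, dotProduct, Fin.sum_univ_three]; ring

private lemma dcross (u v : Fin 3 → ℝ) :
    (u ⬝ᵥ u) • v = (u ⬝ᵥ v) • u + u ×₃ (v ×₃ u) := by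
  funext i; fin_cases i <;>
    (simp [crossProduct, dotProduct, Fin.sum_univ_three]; ring)

private lemma bac (v a b : Fin 3 → ℝ) :
    v ×₃ (a ×₃ b) = (v ⬝ᵥ b) • a - (v ⬝ᵥ a) • b := by
  funext i; fin_cases i <;>
    (simp [crossProduct, dotProduct, Fin.sum_univ_three]; ring)

open Matrix in
theorem stmt_8 (κ τ H₁ H₂ : ℝ)
    (h₁ : H₁ ^ 2 + τ ^ 2 ≠ 0) (h₂ : H₂ ^ 2 + τ ^ 2 ≠ 0)
    (α₁ α₂ : ℝ)
    (hα₁ : α₁ = (κ - 4 * τ ^ 2) / (2 * Real.sqrt (H₁ ^ 2 + τ ^ 2)))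
    (hα₂ : α₂ = (κ - 4 * τ ^ 2) / (2 * Real.sqrt (H₂ ^ 2 + τ ^ 2)))
    (N₁ N₂ : Fin 3 → ℝ)
    (hN₁ : N₁ ⬝ᵥ N₁ = 1) (hN₂ : N₂ ⬝ᵥ N₂ = 1)
    (hangle : (N₁ ⬝ᵥ N₂) ^ 2 ≠ 1)
    (u : Fin 3 → ℝ) (hu : u = N₁ ×₃ N₂)
    (T₁ T₂ : Fin 3 → ℝ) (hT₁ : T₁ ⬝ᵥ N₁ = 0) (hT₂ : T₂ ⬝ᵥ N₂ = 0)
    (θ₁ θ₂ : ℝ) (T₁θ T₂θ : Fin 3 → ℝ)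
    (hT₁θ : T₁θ = Real.cos θ₁ • T₁ + Real.sin θ₁ • (N₁ ×₃ T₁))
    (hT₂θ : T₂θ = Real.cos θ₂ • T₂ + Real.sin θ₂ • (N₂ ×₃ T₂))
    (A₁ A₂ : (Fin 3 → ℝ) →ₗ[ℝ] (Fin 3 → ℝ))
    (hA₁sym : ∀ x y : Fin 3 → ℝ, (A₁ x) ⬝ᵥ y = x ⬝ᵥ (A₁ y))
    (hA₂sym : ∀ x y : Fin 3 → ℝ, (A₂ x) ⬝ᵥ y = x ⬝ᵥ (A₂ y))
    (hA₁N : A₁ N₁ = 0) (hA₂N : A₂ N₂ = 0)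
    (S₁ S₂ : (Fin 3 → ℝ) → (Fin 3 → ℝ))
    (hS₁ : ∀ x, S₁ x = A₁ x - (α₁ * (T₁θ ⬝ᵥ x)) • T₁θ + (α₁ * (T₁ ⬝ᵥ T₁) / 2) • x - H₁ • x)
    (hS₂ : ∀ x, S₂ x = A₂ x - (α₂ * (T₂θ ⬝ᵥ x)) • T₂θ + (α₂ * (T₂ ⬝ᵥ T₂) / 2) • x - H₂ • x)
    (ha : (A₁ u) ⬝ᵥ N₂ + (A₂ u) ⬝ᵥ N₁ = 0)
    (hb : Real.sqrt (H₁ ^ 2 + τ ^ 2) * ((T₂θ ⬝ᵥ N₁) * ((N₂ ×₃ T₂θ) ⬝ᵥ N₁)) =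
          Real.sqrt (H₂ ^ 2 + τ ^ 2) * ((T₁θ ⬝ᵥ N₂) * ((N₁ ×₃ T₁θ) ⬝ᵥ N₂))) :
    (∃ c : ℝ, S₁ u = c • u) ↔ (∃ c : ℝ, S₂ u = c • u) := by
  have huN₁ : u ⬝ᵥ N₁ = 0 := by rw [hu]; exact cp_dot_left _ _
  have huN₂ : u ⬝ᵥ N₂ = 0 := by rw [hu]; exact cp_dot_right _ _
  have huu : u ⬝ᵥ u ≠ 0 := by
    rw [hu, lagrange, hN₁, hN₂]
    intro h
    exact hangle (by linarith)
  -- parallelism criterion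
  have para : ∀ v : Fin 3 → ℝ, v ⬝ᵥ N₁ = 0 → v ⬝ᵥ N₂ = 0 → ∃ c : ℝ, v = c • u := by
    intro v hv1 hv2
    have hvu : v ×₃ u = 0 := by
      rw [hu, bac, hv1, hv2]; simp
    have hd := dcross u v
    rw [hvu] at hd
    simp only [map_zero, add_zero] at hd
    refine ⟨(u ⬝ᵥ v) / (u ⬝ᵥ u), ?_⟩
    rw [div_eq_inv_mul, mul_smul, ← hd, inv_smul_smul₀ huu]
  -- orthogonality of Tθ's
  have hT₁θN₁ : T₁θ ⬝ᵥ N₁ = 0 := by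
    rw [hT₁θ, add_dotProduct, smul_dotProduct, smul_dotProduct, hT₁, cp_dot_left]
    simp
  have hT₂θN₂ : T₂θ ⬝ᵥ N₂ = 0 := by
    rw [hT₂θ, add_dotProduct, smul_dotProduct, smul_dotProduct, hT₂, cp_dot_left]
    simp
  have hA₁uN₁ : (A₁ u) ⬝ᵥ N₁ = 0 := by rw [hA₁sym, hA₁N]; simp [dotProduct]
  have hA₂uN₂ : (A₂ u) ⬝ᵥ N₂ = 0 := by rw [hA₂sym, hA₂N]; simp [dotProduct]
  -- components along own normals vanish
  have hs₁N₁ : S₁ u ⬝ᵥ N₁ = 0 := by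
    rw [hS₁]
    simp only [sub_dotProduct, add_dotProduct, smul_dotProduct]
    rw [hA₁uN₁, hT₁θN₁, huN₁]; simp
  have hs₂N₂ : S₂ u ⬝ᵥ N₂ = 0 := by
    rw [hS₂]
    simp only [sub_dotProduct, add_dotProduct, smul_dotProduct]
    rw [hA₂uN₂, hT₂θN₂, huN₂]; simp
  -- triple product rewrites
  have ht1 : T₁θ ⬝ᵥ u = -((N₁ ×₃ T₁θ) ⬝ᵥ N₂) := by rw [hu]; exact triple2 _ _ _
  have ht2 : T₂θ ⬝ᵥ u = (N₂ ×₃ T₂θ) ⬝ᵥ N₁ := by rw [hu]; exact triple _ _ _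
  -- cross components
  have hs₁N₂ : S₁ u ⬝ᵥ N₂ =
      (A₁ u) ⬝ᵥ N₂ + α₁ * ((T₁θ ⬝ᵥ N₂) * ((N₁ ×₃ T₁θ) ⬝ᵥ N₂)) := by
    rw [hS₁]
    simp only [sub_dotProduct, add_dotProduct, smul_dotProduct]
    rw [ht1, huN₂]; simp [smul_eq_mul]; ring
  have hs₂N₁ : S₂ u ⬝ᵥ N₁ =
      (A₂ u) ⬝ᵥ N₁ - α₂ * ((T₂θ ⬝ᵥ N₁) * ((N₂ ×₃ T₂θ) ⬝ᵥ N₁)) := by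
    rw [hS₂]
    simp only [sub_dotProduct, add_dotProduct, smul_dotProduct]
    rw [ht2, huN₁]; simp [smul_eq_mul]; ring
  -- α₂ t₂ = α₁ t₁
  have hr₁ : Real.sqrt (H₁ ^ 2 + τ ^ 2) ≠ 0 := by
    refine Real.sqrt_ne_zero'.mpr ?_
    rcases lt_or_eq_of_le (by positivity : (0:ℝ) ≤ H₁ ^ 2 + τ ^ 2) with h | h
    · exact h
    · exact absurd h.symm h₁
  have hr₂ : Real.sqrt (H₂ ^ 2 + τ ^ 2) ≠ 0 := by
    refine Real.sqrt_ne_zero'.mpr ?_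
    rcases lt_or_eq_of_le (by positivity : (0:ℝ) ≤ H₂ ^ 2 + τ ^ 2) with h | h
    · exact h
    · exact absurd h.symm h₂
  have hαt : α₂ * ((T₂θ ⬝ᵥ N₁) * ((N₂ ×₃ T₂θ) ⬝ᵥ N₁)) =
      α₁ * ((T₁θ ⬝ᵥ N₂) * ((N₁ ×₃ T₁θ) ⬝ᵥ N₂)) := by
    have key : ∀ r₁ r₂ t₁ t₂ C : ℝ, r₁ ≠ 0 → r₂ ≠ 0 → r₁ * t₂ = r₂ * t₁ →
        C / (2 * r₂) * t₂ = C / (2 * r₁) * t₁ := by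
      intro r₁ r₂ t₁ t₂ C hr1 hr2 h
      field_simp
      linear_combination C * h
    rw [hα₁, hα₂]
    exact key _ _ _ _ _ hr₁ hr₂ hb
  -- the two cross components are opposite
  have hopp : S₂ u ⬝ᵥ N₁ = -(S₁ u ⬝ᵥ N₂) := by
    rw [hs₁N₂, hs₂N₁, hαt]; linarith
  constructor
  · rintro ⟨c, hc⟩
    have h2 : S₁ u ⬝ᵥ N₂ = 0 := by rw [hc, smul_dotProduct, huN₂, smul_zero]
    exact para _ (by rw [hopp, h2, neg_zero]) hs₂N₂
  · rintro ⟨c, hc⟩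
    have h1 : S₂ u ⬝ᵥ N₁ = 0 := by rw [hc, smul_dotProduct, huN₁, smul_zero]
    have : S₁ u ⬝ᵥ N₂ = 0 := by rw [hopp] at h1; linarith
    exact para _ hs₁N₁ this
end
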